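/- Let a < b be real numbers. Let f : ℝ → ℝ be continuous on [a,b] and differentiable on (a,b), and let M ≥ 0 satisfy |f'(t)| ≤ M for all t ∈ (a,b). Then |∫_a^b f(t) dt − ((b−a)/2)·((f(a) + f(b))/2 + f((a+b)/2))| ≤ M·(b − a)²/8. -/

import Mathlib

open MeasureTheory Set

lemma abs_int_calc (a c : ℝ) (hac : a < c) :
    (∫ t in a..c, |t - (a + c) / 2|) = (c - a) ^ 2 / 4 := by
  set α := (a + c) / 2 with hα
  have h1 : a ≤ α := by rw [hα]; linarith
  have h2 : α ≤ c := by rw [hα]; linarith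
  have i1 : (∫ t in a..α, |t - α|) = (α - a) ^ 2 / 2 := by
    have heq : (∫ t in a..α, |t - α|) = ∫ t in a..α, (α - t) := by
      apply intervalIntegral.integral_congr
      intro t ht
      rw [uIcc_of_le h1] at ht
      show |t - α| = α - t
      rw [abs_of_nonpos (by linarith [ht.2])]; ring
    rw [heq, intervalIntegral.integral_sub intervalIntegrable_const
      (continuous_id'.continuousOn.intervalIntegrable), integral_id,
      intervalIntegral.integral_const, smul_eq_mul]
    ring
  have i2 : (∫ t in α..c, |t - α|) = (c - α) ^ 2 / 2 := by
    have heq : (∫ t in α..c, |t - α|) = ∫ t in α..c, (t - α) := by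
      apply intervalIntegral.integral_congr
      intro t ht
      rw [uIcc_of_le h2] at ht
      show |t - α| = t - α
      rw [abs_of_nonneg (by linarith [ht.1])]
    rw [heq, intervalIntegral.integral_sub (continuous_id'.continuousOn.intervalIntegrable)
      intervalIntegrable_const, integral_id,
      intervalIntegral.integral_const, smul_eq_mul]
    ring
  have hadd := intervalIntegral.integral_add_adjacent_intervals
    (μ := MeasureTheory.volume) (a := a) (b := α) (c := c) (f := fun t => |t - α|)
    (((continuous_id.sub continuous_const).abs.continuousOn).intervalIntegrable)
    (((continuous_id.sub continuous_const).abs.continuousOn).intervalIntegrable)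
  rw [i1, i2] at hadd
  rw [← hadd, hα]; ring

lemma trap_key (a c M : ℝ) (hac : a < c) (hM : 0 ≤ M) (f f' : ℝ → ℝ)
    (hcont : ContinuousOn f (Icc a c))
    (hderiv : ∀ t ∈ Ioo a c, HasDerivAt f (f' t) t)
    (hint : IntervalIntegrable f' volume a c)
    (hbound : ∀ᵐ t ∂(volume.restrict (Set.uIoc a c)), |f' t| ≤ M) :
    |(∫ t in a..c, f t) - (c - a) / 2 * (f a + f c)| ≤ M * (c - a) ^ 2 / 4 := by
  set α := (a + c) / 2 with hα
  have parts : (∫ t in a..c, (f' t * (t - α) + f t)) =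
      f c * (c - α) - f a * (a - α) := by
    apply intervalIntegral.integral_eq_sub_of_hasDerivAt_of_le hac.le
    · exact hcont.mul ((continuous_id.sub continuous_const).continuousOn)
    · intro t ht
      have := (hderiv t ht).mul ((hasDerivAt_id t).sub_const α)
      exact (by simpa [mul_comm] using this : HasDerivAt (f * fun x => x - α) (f' t * (t - α) + f t) t)
    · exact (hint.mul_continuousOn ((continuous_id.sub continuous_const).continuousOn)).add
        (hcont.intervalIntegrable_of_Icc hac.le)
  have hsplit : (∫ t in a..c, (f' t * (t - α) + f t)) =
      (∫ t in a..c, f' t * (t - α)) + ∫ t in a..c, f t := by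
    apply intervalIntegral.integral_add
    · exact hint.mul_continuousOn ((continuous_id.sub continuous_const).continuousOn)
    · exact hcont.intervalIntegrable_of_Icc hac.le
  have key : (∫ t in a..c, f t) - (c - a) / 2 * (f a + f c) =
      -(∫ t in a..c, f' t * (t - α)) := by
    rw [hsplit] at parts
    have : f c * (c - α) - f a * (a - α) = (c - a) / 2 * (f a + f c) := by
      rw [hα]; ring
    linarith [parts, this]
  rw [key, abs_neg, ← Real.norm_eq_abs]
  calc ‖∫ t in a..c, f' t * (t - α)‖ ≤ ‖∫ t in a..c, M * |t - α|‖ := by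
        apply intervalIntegral.norm_integral_le_abs_of_norm_le
        · filter_upwards [hbound] with t ht
          rw [Real.norm_eq_abs, abs_mul]
          exact mul_le_mul_of_nonneg_right ht (abs_nonneg _)
        · exact (continuous_const.mul
            (continuous_id.sub continuous_const).abs).continuousOn.intervalIntegrable
    _ = M * (c - a) ^ 2 / 4 := by
        rw [Real.norm_eq_abs, intervalIntegral.integral_const_mul, abs_int_calc a c hac,
          abs_of_nonneg (by positivity)]
        ring

theorem averaged_midpoint_trapezoid_inequality (a b M : ℝ) (hab : a < b)
    (f f' : ℝ → ℝ)
    (hcont : ContinuousOn f (Set.Icc a b))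
    (hderiv : ∀ t ∈ Set.Ioo a b, HasDerivAt f (f' t) t)
    (hM : 0 ≤ M) (hbound : ∀ t ∈ Set.Ioo a b, |f' t| ≤ M) :
    |(∫ t in a..b, f t) - (b - a) / 2 * ((f a + f b) / 2 + f ((a + b) / 2))| ≤
      M * (b - a) ^ 2 / 8 := by
  set m := (a + b) / 2 with hm
  have ham : a < m := by rw [hm]; linarith
  have hmb : m < b := by rw [hm]; linarith
  have hsub : ∀ u v : ℝ, a ≤ u → v ≤ b →
      ∀ᵐ t ∂(volume : Measure ℝ), t ∈ Ioc u v → t ∈ Ioo a b := by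
    intro u v hu hv
    refine ae_iff.2 (measure_mono_null ?_ (measure_singleton b))
    intro t ht
    simp only [mem_setOf_eq, not_forall] at ht
    obtain ⟨h1, h2⟩ := ht
    simp only [mem_Ioo, not_and_or, not_lt] at h2
    rcases h2 with h2 | h2
    · exact absurd (lt_of_le_of_lt hu h1.1) (not_lt.2 h2)
    · exact mem_singleton_iff.2 (le_antisymm (h1.2.trans hv) h2)
  have hmeas : ∀ u v : ℝ, a ≤ u → v ≤ b → u < v →
      IntervalIntegrable f' volume u v := by
    intro u v hu hv huv
    rw [intervalIntegrable_iff_integrableOn_Ioc_of_le huv.le]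
    have hae : ∀ᵐ t ∂(volume.restrict (Ioc u v)), t ∈ Ioo a b :=
      (ae_restrict_iff' measurableSet_Ioc).2 (hsub u v hu hv)
    have haeeq : f' =ᵐ[volume.restrict (Ioc u v)] deriv f := by
      filter_upwards [hae] with t ht
      exact ((hderiv t ht).deriv).symm
    refine Integrable.mono' (g := fun _ => M) (integrableOn_const measure_Ioc_lt_top.ne) ?_ ?_
    · exact (measurable_deriv f).aestronglyMeasurable.congr haeeq.symm
    · filter_upwards [hae] with t ht
      exact hbound t ht
  have haeb : ∀ u v : ℝ, a ≤ u → v ≤ b → u < v →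
      ∀ᵐ t ∂(volume.restrict (Set.uIoc u v)), |f' t| ≤ M := by
    intro u v hu hv huv
    rw [uIoc_of_le huv.le]
    have hae : ∀ᵐ t ∂(volume.restrict (Ioc u v)), t ∈ Ioo a b :=
      (ae_restrict_iff' measurableSet_Ioc).2 (hsub u v hu hv)
    filter_upwards [hae] with t ht
    exact hbound t ht
  have half1 := trap_key a m M ham hM f f'
    (hcont.mono (Icc_subset_Icc le_rfl hmb.le))
    (fun t ht => hderiv t ⟨ht.1, ht.2.trans hmb⟩)
    (hmeas a m le_rfl hmb.le ham)
    (haeb a m le_rfl hmb.le ham)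
  have half2 := trap_key m b M hmb hM f f'
    (hcont.mono (Icc_subset_Icc ham.le le_rfl))
    (fun t ht => hderiv t ⟨ham.trans ht.1, ht.2⟩)
    (hmeas m b ham.le le_rfl hmb)
    (haeb m b ham.le le_rfl hmb)
  have hadd : (∫ t in a..b, f t) = (∫ t in a..m, f t) + ∫ t in m..b, f t := by
    rw [intervalIntegral.integral_add_adjacent_intervals
      ((hcont.mono (Icc_subset_Icc le_rfl hmb.le)).intervalIntegrable_of_Icc ham.le)
      ((hcont.mono (Icc_subset_Icc ham.le le_rfl)).intervalIntegrable_of_Icc hmb.le)]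
  have hq : (b - a) / 2 * ((f a + f b) / 2 + f m) =
      (m - a) / 2 * (f a + f m) + (b - m) / 2 * (f m + f b) := by
    rw [hm]; ring
  have e1 : (m - a) ^ 2 = (b - a) ^ 2 / 4 := by rw [hm]; ring
  have e2 : (b - m) ^ 2 = (b - a) ^ 2 / 4 := by rw [hm]; ring
  rw [e1] at half1; rw [e2] at half2
  calc |(∫ t in a..b, f t) - (b - a) / 2 * ((f a + f b) / 2 + f ((a + b) / 2))|
      = |((∫ t in a..m, f t) - (m - a) / 2 * (f a + f m)) +
         ((∫ t in m..b, f t) - (b - m) / 2 * (f m + f b))| := by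
        rw [hadd, ← hm, hq]; ring_nf
    _ ≤ |(∫ t in a..m, f t) - (m - a) / 2 * (f a + f m)| +
        |(∫ t in m..b, f t) - (b - m) / 2 * (f m + f b)| := abs_add_le _ _
    _ ≤ M * ((b - a) ^ 2 / 4) / 4 + M * ((b - a) ^ 2 / 4) / 4 := add_le_add half1 half2
    _ = M * (b - a) ^ 2 / 8 := by ring
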